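/- Every perfect graph is quasiperfect. -/

import Mathlib

open SimpleGraph Finset

variable {V : Type} [Fintype V] [DecidableEq V]

/-- `s` is an independent set of `G`: pairwise non-adjacent vertices. -/
def IsIndepSet' (G : SimpleGraph V) (s : Set V) : Prop :=
  s.Pairwise fun a b => ¬ G.Adj a b

/-- The clique number of the subgraph of `G` induced on the vertex set `s`. -/
noncomputable def cliqueNumOn (G : SimpleGraph V) (s : Finset V) : ℕ :=
  sSup {n | ∃ t : Finset V, t ⊆ s ∧ G.IsClique ↑t ∧ t.card = n}

/-- The independence number of the subgraph of `G` induced on the vertex set `s`. -/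
noncomputable def indepNumOn (G : SimpleGraph V) (s : Finset V) : ℕ :=
  sSup {n | ∃ t : Finset V, t ⊆ s ∧ IsIndepSet' G ↑t ∧ t.card = n}

/-- `t` is a maximum clique of the subgraph of `G` induced on `s`. -/
def IsMaxCliqueOn (G : SimpleGraph V) (s t : Finset V) : Prop :=
  t ⊆ s ∧ G.IsClique ↑t ∧ t.card = cliqueNumOn G s

/-- `t` is a maximum independent set of the subgraph of `G` induced on `s`. -/
def IsMaxIndepOn (G : SimpleGraph V) (s t : Finset V) : Prop :=
  t ⊆ s ∧ IsIndepSet' G ↑t ∧ t.card = indepNumOn G s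

/-- Quasiperfectness of the subgraph of `G` induced on the vertex set `s`,
defined inductively on the number of vertices: the empty graph is quasiperfect,
and a nonempty graph is quasiperfect iff it has a prime independent set `PI`
and a prime clique `PK` whose removals leave quasiperfect graphs. -/
inductive QP (G : SimpleGraph V) : Finset V → Prop
  | empty : QP G ∅
  | step (s PI PK : Finset V) (hs : s.Nonempty)
      (hPIsub : PI ⊆ s) (hPIind : IsIndepSet' G ↑PI)
      (hPIint : ∀ t, IsMaxCliqueOn G s t → (PI ∩ t).Nonempty)
      (hPIcov : ∀ v ∈ PI, ∃ t, IsMaxCliqueOn G s t ∧ v ∈ t)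
      (hPKsub : PK ⊆ s) (hPKclq : G.IsClique ↑PK)
      (hPKint : ∀ t, IsMaxIndepOn G s t → (PK ∩ t).Nonempty)
      (hPKcov : ∀ v ∈ PK, ∃ t, IsMaxIndepOn G s t ∧ v ∈ t)
      (hrec1 : QP G (s \ PI)) (hrec2 : QP G (s \ PK)) : QP G s

/-- A graph is quasiperfect if its full vertex set is. -/
def Quasiperfect (G : SimpleGraph V) : Prop := QP G Finset.univ

/-- `G` is perfect: every induced subgraph has clique number equal to chromatic number. -/
def Perfect' (G : SimpleGraph V) : Prop :=
  ∀ s : Finset V, (cliqueNumOn G s : ℕ∞) = (G.induce (↑s : Set V)).chromaticNumber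

open scoped Classical
set_option linter.unusedSectionVars false
set_option linter.unusedVariables false
set_option maxHeartbeats 1000000

lemma cliqueSet_bdd (G : SimpleGraph V) (s : Finset V) :
    BddAbove {n | ∃ t : Finset V, t ⊆ s ∧ G.IsClique ↑t ∧ t.card = n} := by
  refine ⟨s.card, fun n hn => ?_⟩
  obtain ⟨t, hts, -, rfl⟩ := hn
  exact Finset.card_le_card hts

lemma cliqueSet_nonempty (G : SimpleGraph V) (s : Finset V) :
    {n | ∃ t : Finset V, t ⊆ s ∧ G.IsClique ↑t ∧ t.card = n}.Nonempty :=
  ⟨0, ∅, Finset.empty_subset _, by simp, Finset.card_empty⟩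

lemma le_cliqueNumOn (G : SimpleGraph V) {s t : Finset V} (hts : t ⊆ s)
    (hc : G.IsClique ↑t) : t.card ≤ cliqueNumOn G s :=
  le_csSup (cliqueSet_bdd G s) ⟨t, hts, hc, rfl⟩

lemma cliqueNumOn_le (G : SimpleGraph V) {s : Finset V} {n : ℕ}
    (h : ∀ t : Finset V, t ⊆ s → G.IsClique ↑t → t.card ≤ n) : cliqueNumOn G s ≤ n := by
  refine csSup_le (cliqueSet_nonempty G s) ?_
  rintro m ⟨t, hts, hc, rfl⟩
  exact h t hts hc

lemma cliqueNumOn_exists (G : SimpleGraph V) (s : Finset V) :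
    ∃ t : Finset V, t ⊆ s ∧ G.IsClique ↑t ∧ t.card = cliqueNumOn G s :=
  Nat.sSup_mem (cliqueSet_nonempty G s) (cliqueSet_bdd G s)

lemma cliqueNumOn_mono (G : SimpleGraph V) {s₁ s₂ : Finset V} (h : s₁ ⊆ s₂) :
    cliqueNumOn G s₁ ≤ cliqueNumOn G s₂ :=
  cliqueNumOn_le G fun t hts hc => le_cliqueNumOn G (hts.trans h) hc

lemma one_le_cliqueNumOn (G : SimpleGraph V) {s : Finset V} (hs : s.Nonempty) :
    1 ≤ cliqueNumOn G s := by
  obtain ⟨v, hv⟩ := hs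
  have := le_cliqueNumOn G (t := {v}) (by simpa using hv) (by simp)
  simpa using this

lemma isClique_compl_iff (G : SimpleGraph V) (t : Set V) :
    Gᶜ.IsClique t ↔ IsIndepSet' G t := by
  unfold SimpleGraph.IsClique IsIndepSet'
  constructor
  · intro h a ha b hb hab
    exact (h ha hb hab).2
  · intro h a ha b hb hab
    exact ⟨hab, h ha hb hab⟩

lemma isIndep_compl_iff (G : SimpleGraph V) (t : Set V) :
    IsIndepSet' Gᶜ t ↔ G.IsClique t := by
  unfold SimpleGraph.IsClique IsIndepSet'
  constructor
  · intro h a ha b hb hab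
    by_contra hadj
    exact h ha hb hab ⟨hab, hadj⟩
  · intro h a ha b hb hab hc
    exact hc.2 (h ha hb hab)

def NCol (G : SimpleGraph V) (s : Finset V) (m : ℕ) : Prop :=
  ∃ f : V → ℕ, (∀ v ∈ s, f v < m) ∧ ∀ v ∈ s, ∀ w ∈ s, G.Adj v w → f v ≠ f w

lemma NCol.mono {G : SimpleGraph V} {s : Finset V} {m m' : ℕ} (h : m ≤ m') :
    NCol G s m → NCol G s m' := by
  rintro ⟨f, h1, h2⟩
  exact ⟨f, fun v hv => lt_of_lt_of_le (h1 v hv) h, h2⟩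

lemma ncol_of_colorable {G : SimpleGraph V} {s : Finset V} {m : ℕ}
    (h : (G.induce (↑s : Set V)).Colorable m) : NCol G s m := by
  obtain ⟨C⟩ := h
  refine ⟨fun v => if hv : v ∈ s then (C ⟨v, by simpa using hv⟩ : ℕ) else 0, ?_, ?_⟩
  · intro v hv
    simp only []
    rw [dif_pos hv]
    exact (C ⟨v, by simpa using hv⟩).isLt
  · intro v hv w hw hadj
    simp only []
    rw [dif_pos hv, dif_pos hw]
    have : (G.induce (↑s : Set V)).Adj ⟨v, by simpa using hv⟩ ⟨w, by simpa using hw⟩ := by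
      simpa using hadj
    have := C.valid this
    exact fun hEq => this (Fin.ext hEq)

lemma perfect_ncol {G : SimpleGraph V} (h : Perfect' G) (s : Finset V) :
    NCol G s (cliqueNumOn G s) := by
  apply ncol_of_colorable
  rw [← chromaticNumber_le_iff_colorable, ← h s]

lemma exists_prime (G : SimpleGraph V) (s : Finset V) (hs : s.Nonempty)
    (hcol : NCol G s (cliqueNumOn G s)) :
    ∃ PI : Finset V, PI ⊆ s ∧ IsIndepSet' G ↑PI ∧
      (∀ t, IsMaxCliqueOn G s t → (PI ∩ t).Nonempty) ∧
      (∀ v ∈ PI, ∃ t, IsMaxCliqueOn G s t ∧ v ∈ t) := by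
  obtain ⟨f, hlt, hproper⟩ := hcol
  set w := cliqueNumOn G s with hw
  have hw1 : 1 ≤ w := one_le_cliqueNumOn G hs
  refine ⟨s.filter (fun v => f v = 0 ∧ ∃ t, IsMaxCliqueOn G s t ∧ v ∈ t),
    filter_subset _ _, ?_, ?_, ?_⟩
  · intro a ha b hb hab hadj
    simp only [coe_filter, Set.mem_setOf_eq] at ha hb
    exact hproper a ha.1 b hb.1 hadj (ha.2.1.trans hb.2.1.symm)
  · rintro t ⟨hts, htc, htcard⟩
    have hinj : Set.InjOn f ↑t := by
      intro x hx y hy hxy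
      by_contra hne
      exact hproper x (hts hx) y (hts hy) (htc hx hy hne) hxy
    have himcard : (t.image f).card = t.card := card_image_of_injOn hinj
    have hsub : t.image f ⊆ range w := by
      intro n hn; obtain ⟨x, hx, rfl⟩ := mem_image.mp hn
      exact mem_range.mpr (hlt x (hts hx))
    have him : t.image f = range w :=
      eq_of_subset_of_card_le hsub (by rw [himcard, htcard, card_range])
    have h0 : (0:ℕ) ∈ t.image f := by rw [him]; exact mem_range.mpr hw1
    obtain ⟨x, hx, hfx⟩ := mem_image.mp h0
    exact ⟨x, mem_inter.mpr ⟨mem_filter.mpr ⟨hts hx, hfx, t, ⟨hts, htc, htcard⟩, hx⟩, hx⟩⟩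
  · intro v hv
    exact (mem_filter.mp hv).2.2
lemma clique_inter_indep_card_le_one (G : SimpleGraph V) (P K : Finset V)
    (hP : G.IsClique ↑P) (hK : Gᶜ.IsClique ↑K) : (P ∩ K).card ≤ 1 := by
  rw [Finset.card_le_one]
  intro x hx y hy
  by_contra hne
  have hx' := mem_inter.mp hx
  have hy' := mem_inter.mp hy
  have h1 : G.Adj x y := hP (by exact_mod_cast hx'.1) (by exact_mod_cast hy'.1) hne
  have h2 : Gᶜ.Adj x y := hK (by exact_mod_cast hx'.2) (by exact_mod_cast hy'.2) hne
  exact h2.2 h1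

theorem core (G : SimpleGraph V) (hG : ∀ s : Finset V, NCol G s (cliqueNumOn G s)) :
    ∀ s : Finset V, NCol Gᶜ s (cliqueNumOn Gᶜ s) := by
  suffices h : ∀ (n : ℕ) (s : Finset V), s.card ≤ n → NCol Gᶜ s (cliqueNumOn Gᶜ s) from
    fun s => h s.card s le_rfl
  intro n
  induction n with
  | zero =>
    intro s hs
    have hse : s = ∅ := card_eq_zero.mp (Nat.le_zero.mp hs)
    subst hse
    exact ⟨fun _ => 0, by simp, by simp⟩
  | succ n ih =>
    intro s hcard
    by_contra hbad
    have hsne : s.Nonempty := by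
      rcases s.eq_empty_or_nonempty with rfl | h
      · exact (hbad ⟨fun _ => 0, by simp, by simp⟩).elim
      · exact h
    set w := cliqueNumOn Gᶜ s with hwdef
    set a := cliqueNumOn G s with hadef
    have hw1 : 1 ≤ w := one_le_cliqueNumOn Gᶜ hsne
    have ha1 : 1 ≤ a := one_le_cliqueNumOn G hsne
    have hmin : ∀ s' : Finset V, s' ⊂ s → NCol Gᶜ s' (cliqueNumOn Gᶜ s') := by
      intro s' hss
      exact ih s' (by have := Finset.card_lt_card hss; omega)
    -- counting: s.card ≤ a * w
    have hcount : s.card ≤ a * w := by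
      obtain ⟨f, hlt, hpr⟩ := hG s
      have hcls : ∀ k, ((s.filter fun v => f v = k)).card ≤ w := by
        intro k
        apply le_cliqueNumOn Gᶜ (filter_subset _ _)
        intro x hx y hy hne
        simp only [coe_filter, Set.mem_setOf_eq] at hx hy
        refine (compl_adj G x y).mpr ⟨hne, ?_⟩
        intro hadj
        exact hpr x hx.1 y hy.1 hadj (hx.2.trans hy.2.symm)
      have hsub : s ⊆ (range a).biUnion fun k => s.filter fun v => f v = k := by
        intro v hv
        exact mem_biUnion.mpr ⟨f v, mem_range.mpr (hlt v hv), mem_filter.mpr ⟨hv, rfl⟩⟩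
      calc s.card ≤ ((range a).biUnion fun k => s.filter fun v => f v = k).card :=
            card_le_card hsub
        _ ≤ ∑ k ∈ range a, (s.filter fun v => f v = k).card := card_biUnion_le
        _ ≤ ∑ _k ∈ range a, w := sum_le_sum fun k _ => hcls k
        _ = a * w := by rw [sum_const, card_range, smul_eq_mul]
    -- key clique extraction
    have keyB : ∀ S : Finset V, S ⊆ s → G.IsClique ↑S →
        ∃ B : Finset V, B ⊆ s \ S ∧ Gᶜ.IsClique ↑B ∧ B.card = w := by
      intro S hSs hSc
      have hge : w ≤ cliqueNumOn Gᶜ (s \ S) := by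
        by_contra hlt'
        push_neg at hlt'
        rcases S.eq_empty_or_nonempty with rfl | hSne
        · rw [sdiff_empty, ← hwdef] at hlt'
          exact lt_irrefl _ hlt'
        · have hss : s \ S ⊂ s := Finset.sdiff_ssubset hSs hSne
          obtain ⟨f, hflt, hfpr⟩ := hmin _ hss
          apply hbad
          refine ⟨fun v => if v ∈ S then cliqueNumOn Gᶜ (s \ S) else f v, ?_, ?_⟩
          · intro v hv
            by_cases h : v ∈ S
            · simp only [if_pos h]; exact hlt'
            · simp only [if_neg h]
              exact lt_trans (hflt v (mem_sdiff.mpr ⟨hv, h⟩)) hlt'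
          · intro u hu v hv hadj
            by_cases h1 : u ∈ S <;> by_cases h2 : v ∈ S
            · exact ((((compl_adj G u v).mp hadj).2)
                (hSc (by exact_mod_cast h1) (by exact_mod_cast h2) hadj.ne)).elim
            · simp only [if_pos h1, if_neg h2]
              exact ne_of_gt (hflt v (mem_sdiff.mpr ⟨hv, h2⟩))
            · simp only [if_neg h1, if_pos h2]
              exact ne_of_lt (hflt u (mem_sdiff.mpr ⟨hu, h1⟩))
            · simp only [if_neg h1, if_neg h2]
              exact hfpr u (mem_sdiff.mpr ⟨hu, h1⟩) v (mem_sdiff.mpr ⟨hv, h2⟩) hadj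
      obtain ⟨t, hts, htc, htcard⟩ := cliqueNumOn_exists Gᶜ (s \ S)
      obtain ⟨B, hBt, hBcard⟩ := Finset.exists_subset_card_eq (s := t) (n := w) (htcard ▸ hge)
      exact ⟨B, hBt.trans hts, htc.subset (by exact_mod_cast hBt), hBcard⟩
    obtain ⟨S0, hS0s, hS0c, hS0card⟩ := cliqueNumOn_exists G s
    have hNColErase : ∀ u : {x // x ∈ S0}, NCol Gᶜ (s.erase ↑u) w := fun u =>
      (hmin _ (Finset.erase_ssubset (hS0s u.2))).mono
        (cliqueNumOn_mono Gᶜ (Finset.erase_subset _ _))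
    choose F hFlt hFpr using hNColErase
    set ι := Option ({x // x ∈ S0} × Fin w) with hιdef
    set A : ι → Finset V :=
      fun i => i.elim S0 (fun p => (s.erase ↑p.1).filter fun x => F p.1 x = ↑p.2) with hAdef
    have hmemA : ∀ (p : {x // x ∈ S0} × Fin w) (x : V),
        x ∈ A (some p) ↔ x ∈ s.erase ↑p.1 ∧ F p.1 x = ↑p.2 := by
      intro p x
      simp [hAdef]
    have hAs : ∀ i, A i ⊆ s := by
      rintro (_ | ⟨u, k⟩)
      · exact hS0s
      · exact (Finset.filter_subset _ _).trans (Finset.erase_subset _ _)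
    have hAclq : ∀ i, G.IsClique ↑(A i) := by
      rintro (_ | ⟨u, k⟩)
      · exact hS0c
      · intro x hx y hy hne
        simp only [hAdef, Option.elim, coe_filter, Set.mem_setOf_eq] at hx hy
        by_contra hadj
        exact hFpr u x hx.1 y hy.1 ((compl_adj G x y).mpr ⟨hne, hadj⟩) (hx.2.trans hy.2.symm)
    have hBex : ∀ i, ∃ B : Finset V, B ⊆ s \ A i ∧ Gᶜ.IsClique ↑B ∧ B.card = w :=
      fun i => keyB (A i) (hAs i) (hAclq i)
    choose Bf hB1 hB2 hB3 using hBex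
    have hBs : ∀ i, Bf i ⊆ s := fun i => (hB1 i).trans sdiff_subset
    have hdisj : ∀ i, A i ∩ Bf i = ∅ := by
      intro i
      rw [Finset.eq_empty_iff_forall_notMem]
      intro x hx
      have hx' := mem_inter.mp hx
      exact (mem_sdiff.mp (hB1 i hx'.2)).2 hx'.1
    -- pigeonhole lemmas
    have PH : ∀ K : Finset V, K ⊆ s → Gᶜ.IsClique ↑K → K.card = w →
        ∀ (u : {x // x ∈ S0}), ↑u ∉ K → ∀ k : Fin w,
          (A (some (u, k)) ∩ K).Nonempty := by
      intro K hKs hKc hKw u hu k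
      have hKe : K ⊆ s.erase ↑u := Finset.subset_erase.mpr ⟨hKs, hu⟩
      have hinj : Set.InjOn (F u) ↑K := by
        intro x hx y hy hxy
        by_contra hne
        exact hFpr u x (hKe (by exact_mod_cast hx)) y (hKe (by exact_mod_cast hy))
          (hKc hx hy hne) hxy
      have himcard : (K.image (F u)).card = K.card := card_image_of_injOn hinj
      have hsub : K.image (F u) ⊆ range w := by
        intro m hm
        obtain ⟨x, hx, rfl⟩ := mem_image.mp hm
        exact mem_range.mpr (hFlt u x (hKe hx))
      have him : K.image (F u) = range w :=
        eq_of_subset_of_card_le hsub (by rw [himcard, hKw, card_range])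
      have hk : (k : ℕ) ∈ K.image (F u) := by rw [him]; exact mem_range.mpr k.isLt
      obtain ⟨x, hx, hfx⟩ := mem_image.mp hk
      exact ⟨x, mem_inter.mpr ⟨(hmemA (u, k) x).mpr ⟨hKe hx, hfx⟩, hx⟩⟩
    have PH2 : ∀ K : Finset V, K ⊆ s → Gᶜ.IsClique ↑K → K.card = w →
        ∀ (u : {x // x ∈ S0}), ↑u ∈ K → ∀ k k' : Fin w, k ≠ k' →
          A (some (u, k)) ∩ K = ∅ → (A (some (u, k')) ∩ K).Nonempty := by
      intro K hKs hKc hKw u hu k k' hkk' hk0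
      have hK'e : K.erase ↑u ⊆ s.erase ↑u := Finset.erase_subset_erase _ hKs
      have hinj : Set.InjOn (F u) ↑(K.erase ↑u) := by
        intro x hx y hy hxy
        by_contra hne
        exact hFpr u x (hK'e (by exact_mod_cast hx)) y (hK'e (by exact_mod_cast hy))
          (hKc (by exact_mod_cast (Finset.erase_subset _ _ (by exact_mod_cast hx)))
            (by exact_mod_cast (Finset.erase_subset _ _ (by exact_mod_cast hy))) hne) hxy
      have himcard : ((K.erase ↑u).image (F u)).card = w - 1 := by
        rw [card_image_of_injOn hinj, card_erase_of_mem hu, hKw]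
      have hsub : (K.erase ↑u).image (F u) ⊆ (range w).erase ↑k := by
        intro m hm
        obtain ⟨x, hx, rfl⟩ := mem_image.mp hm
        refine mem_erase.mpr ⟨?_, mem_range.mpr (hFlt u x (hK'e hx))⟩
        intro hEq
        have hxA : x ∈ A (some (u, k)) ∩ K :=
          mem_inter.mpr ⟨(hmemA (u, k) x).mpr ⟨hK'e hx, hEq⟩, Finset.erase_subset _ _ hx⟩
        rw [hk0] at hxA
        exact notMem_empty _ hxA
      have him : (K.erase ↑u).image (F u) = (range w).erase ↑k :=
        eq_of_subset_of_card_le hsub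
          (by rw [card_erase_of_mem (mem_range.mpr k.isLt), card_range, himcard])
      have hk' : (k' : ℕ) ∈ (range w).erase ↑k :=
        mem_erase.mpr ⟨fun h => hkk' (Fin.ext h).symm, mem_range.mpr k'.isLt⟩
      rw [← him] at hk'
      obtain ⟨x, hx, hfx⟩ := mem_image.mp hk'
      exact ⟨x, mem_inter.mpr ⟨(hmemA (u, k') x).mpr ⟨hK'e hx, hfx⟩,
        Finset.erase_subset _ _ hx⟩⟩
    have claim : ∀ i j : ι, i ≠ j → (A i ∩ Bf j).Nonempty := by
      intro i j hij
      by_cases hS0K : (S0 ∩ Bf j).Nonempty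
      · obtain ⟨u0, hu0⟩ := hS0K
        have hu0' := mem_inter.mp hu0
        have huniq : ∀ x ∈ S0 ∩ Bf j, x = u0 :=
          fun x hx => Finset.card_le_one.mp
            (clique_inter_indep_card_le_one G S0 (Bf j) hS0c (hB2 j)) x hx u0 hu0
        have hBmeets : ∀ (u : {x // x ∈ S0}) (k : Fin w), (↑u : V) ≠ u0 →
            (A (some (u, k)) ∩ Bf j).Nonempty := fun u k hne =>
          PH (Bf j) (hBs j) (hB2 j) (hB3 j) u
            (fun huK => hne (huniq _ (mem_inter.mpr ⟨u.2, huK⟩))) k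
        obtain (_ | ⟨u, k⟩) := j
        · have h0 : u0 ∈ (∅ : Finset V) := by
            rw [← hdisj none]; exact hu0
          exact (notMem_empty u0 h0).elim
        · have hu : (↑u : V) = u0 := by
            by_contra hne
            have hx := hBmeets u k hne
            rw [hdisj (some (u, k))] at hx
            exact Finset.not_nonempty_empty hx
          obtain (_ | ⟨u', k'⟩) := i
          · exact ⟨u0, mem_inter.mpr ⟨hu0'.1, hu0'.2⟩⟩
          · by_cases h' : (↑u' : V) = u0
            · have huu : u' = u := Subtype.ext (h'.trans hu.symm)
              subst huu
              have hkk : k ≠ k' := fun h => hij (by rw [h])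
              exact PH2 (Bf (some (u', k))) (hBs _) (hB2 _) (hB3 _) u'
                (by rw [hu]; exact hu0'.2) k k' hkk (hdisj (some (u', k)))
            · exact hBmeets u' k' h'
      · have hnK : ∀ u : {x // x ∈ S0}, (↑u : V) ∉ Bf j := fun u hu =>
          hS0K ⟨↑u, mem_inter.mpr ⟨u.2, hu⟩⟩
        obtain (_ | ⟨u, k⟩) := j
        · obtain (_ | ⟨u', k'⟩) := i
          · exact (hij rfl).elim
          · exact PH (Bf none) (hBs none) (hB2 none) (hB3 none) u' (hnK u') k'
        · have hx := PH (Bf (some (u, k))) (hBs _) (hB2 _) (hB3 _) u (hnK _) k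
          rw [hdisj (some (u, k))] at hx
          exact (Finset.not_nonempty_empty hx).elim
    -- entries of the incidence product
    have hentry : ∀ i j : ι, ((A i ∩ Bf j).card : ℚ) = if i = j then 0 else 1 := by
      intro i j
      by_cases h : i = j
      · subst h; rw [hdisj i]; simp
      · rw [if_neg h]
        have h1 := clique_inter_indep_card_le_one G (A i) (Bf j) (hAclq i) (hB2 j)
        have h2 : 1 ≤ (A i ∩ Bf j).card := Finset.card_pos.mpr (claim i j h)
        have h3 : (A i ∩ Bf j).card = 1 := le_antisymm h1 h2
        rw [h3]; norm_num
    have hcardsum : ∀ (P Q : Finset V), P ⊆ s → Q ⊆ s →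
        ((P ∩ Q).card : ℚ) =
          ∑ x : {y // y ∈ s}, (if (↑x : V) ∈ P then (1:ℚ) else 0) *
            (if (↑x : V) ∈ Q then (1:ℚ) else 0) := by
      intro P Q hP hQ
      have hterm : ∀ x : V, (if x ∈ P then (1:ℚ) else 0) * (if x ∈ Q then (1:ℚ) else 0)
          = if x ∈ P ∩ Q then 1 else 0 := by
        intro x
        by_cases h1 : x ∈ P <;> by_cases h2 : x ∈ Q <;> simp [h1, h2]
      have h1 : ∑ x : {y // y ∈ s}, (if (↑x : V) ∈ P then (1:ℚ) else 0) *
            (if (↑x : V) ∈ Q then (1:ℚ) else 0)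
          = ∑ x ∈ s, (if x ∈ P ∩ Q then (1:ℚ) else 0) := by
        simp_rw [hterm]
        exact Finset.sum_coe_sort s (fun x => if x ∈ P ∩ Q then (1:ℚ) else 0)
      rw [h1, Finset.sum_boole]
      congr 1
      rw [Finset.filter_mem_eq_inter, Finset.inter_eq_right.mpr
        ((Finset.inter_subset_left).trans hP)]
    have hNcard : Fintype.card ι = a * w + 1 := by
      simp [hιdef, hS0card, hadef]
    have hN2 : 2 ≤ Fintype.card ι := by
      have h1 : 1 * 1 ≤ a * w := Nat.mul_le_mul ha1 hw1
      omega
    have hli : LinearIndependent ℚ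
        (fun i : ι => fun x : {y // y ∈ s} => if (↑x : V) ∈ A i then (1:ℚ) else 0) := by
      rw [Fintype.linearIndependent_iff]
      intro g hg
      have hgx : ∀ x : {y // y ∈ s},
          ∑ i : ι, g i * (if (↑x : V) ∈ A i then (1:ℚ) else 0) = 0 := by
        intro x
        have h0 := congrFun hg x
        simpa [Finset.sum_apply] using h0
      have key : ∀ j : ι, ∑ i : ι, g i * ((A i ∩ Bf j).card : ℚ) = 0 := by
        intro j
        have hswap : ∑ i : ι, g i * ((A i ∩ Bf j).card : ℚ)
            = ∑ x : {y // y ∈ s}, (∑ i : ι, g i * (if (↑x : V) ∈ A i then (1:ℚ) else 0)) *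
              (if (↑x : V) ∈ Bf j then (1:ℚ) else 0) := by
          simp_rw [fun i => hcardsum (A i) (Bf j) (hAs i) (hBs j), Finset.mul_sum,
            Finset.sum_mul, mul_assoc]
          rw [Finset.sum_comm]
        rw [hswap]
        simp_rw [hgx]
        simp
      have key2 : ∀ j : ι, (∑ i : ι, g i) - g j = 0 := by
        intro j
        have hk := key j
        simp_rw [hentry] at hk
        have htr : ∀ i : ι, g i * (if i = j then (0:ℚ) else 1)
            = g i - (if i = j then g i else 0) := by
          intro i
          by_cases h : i = j <;> simp [h]
        rw [Finset.sum_congr rfl (fun i _ => htr i), Finset.sum_sub_distrib] at hk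
        rwa [Finset.sum_ite_eq' Finset.univ j g, if_pos (Finset.mem_univ j)] at hk
      have hgj : ∀ j, g j = ∑ i : ι, g i := fun j => by have := key2 j; linarith
      have hsum : (∑ i : ι, g i) = (Fintype.card ι : ℚ) * (∑ i : ι, g i) := by
        conv_lhs => rw [Finset.sum_congr rfl (fun i _ => hgj i)]
        rw [Finset.sum_const, Finset.card_univ, nsmul_eq_mul]
      have h3 : ((Fintype.card ι : ℚ) - 1) * (∑ i : ι, g i) = 0 := by
        rw [sub_mul, one_mul, sub_eq_zero]
        exact hsum.symm
      rcases mul_eq_zero.mp h3 with h4 | h4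
      · exfalso
        have h5 : (2:ℚ) ≤ (Fintype.card ι : ℚ) := by exact_mod_cast hN2
        linarith
      · intro i
        rw [hgj i, h4]
    have hle := hli.fintype_card_le_finrank
    rw [Module.finrank_fintype_fun_eq_card, Fintype.card_coe, hNcard] at hle
    omega

lemma indepNumOn_eq (G : SimpleGraph V) (s : Finset V) :
    indepNumOn G s = cliqueNumOn Gᶜ s := by
  unfold indepNumOn cliqueNumOn
  congr 1
  ext n
  simp only [Set.mem_setOf_eq]
  constructor
  · rintro ⟨t, h1, h2, h3⟩
    exact ⟨t, h1, (isClique_compl_iff G ↑t).mpr h2, h3⟩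
  · rintro ⟨t, h1, h2, h3⟩
    exact ⟨t, h1, (isClique_compl_iff G ↑t).mp h2, h3⟩

lemma isMaxCliqueOn_compl (G : SimpleGraph V) (s t : Finset V) :
    IsMaxCliqueOn Gᶜ s t ↔ IsMaxIndepOn G s t := by
  unfold IsMaxCliqueOn IsMaxIndepOn
  rw [isClique_compl_iff, indepNumOn_eq]

theorem qp_all (G : SimpleGraph V) (h : Perfect' G)
    (hc : ∀ s : Finset V, NCol Gᶜ s (cliqueNumOn Gᶜ s)) :
    ∀ (n : ℕ) (s : Finset V), s.card ≤ n → QP G s := by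
  intro n
  induction n with
  | zero =>
    intro s hs
    rw [card_eq_zero.mp (Nat.le_zero.mp hs)]
    exact QP.empty
  | succ n ih =>
    intro s hcard
    rcases s.eq_empty_or_nonempty with rfl | hsne
    · exact QP.empty
    obtain ⟨PI, hPI1, hPI2, hPI3, hPI4⟩ := exists_prime G s hsne (perfect_ncol h s)
    obtain ⟨PK, hPK1, hPK2, hPK3, hPK4⟩ := exists_prime Gᶜ s hsne (hc s)
    have hPK2' : G.IsClique ↑PK := (isIndep_compl_iff G ↑PK).mp hPK2
    have hPK3' : ∀ t, IsMaxIndepOn G s t → (PK ∩ t).Nonempty := fun t ht =>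
      hPK3 t ((isMaxCliqueOn_compl G s t).mpr ht)
    have hPK4' : ∀ v ∈ PK, ∃ t, IsMaxIndepOn G s t ∧ v ∈ t := by
      intro v hv
      obtain ⟨t, ht, hvt⟩ := hPK4 v hv
      exact ⟨t, (isMaxCliqueOn_compl G s t).mp ht, hvt⟩
    have hPIne : PI.Nonempty := by
      obtain ⟨t, hts, htc, htcard⟩ := cliqueNumOn_exists G s
      obtain ⟨x, hx⟩ := hPI3 t ⟨hts, htc, htcard⟩
      exact ⟨x, (mem_inter.mp hx).1⟩
    have hPKne : PK.Nonempty := by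
      obtain ⟨t, hts, htc, htcard⟩ := cliqueNumOn_exists Gᶜ s
      obtain ⟨x, hx⟩ := hPK3 t ⟨hts, htc, htcard⟩
      exact ⟨x, (mem_inter.mp hx).1⟩
    refine QP.step s PI PK hsne hPI1 hPI2 hPI3 hPI4 hPK1 hPK2' hPK3' hPK4' ?_ ?_
    · apply ih
      have hlt := Finset.card_lt_card (Finset.sdiff_ssubset hPI1 hPIne)
      omega
    · apply ih
      have hlt := Finset.card_lt_card (Finset.sdiff_ssubset hPK1 hPKne)
      omega

theorem stmt_9 (G : SimpleGraph V) (h : Perfect' G) : Quasiperfect G := by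
  have hc : ∀ s : Finset V, NCol Gᶜ s (cliqueNumOn Gᶜ s) :=
    core G (fun s => perfect_ncol h s)
  exact qp_all G h hc Finset.univ.card Finset.univ le_rfl
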